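/- There is an absolute constant C > 0 with the following property. Let Γ ⊂ 𝔻 be a countable union of rectifiable curves such that the one-dimensional Hausdorff (arclength) measure restricted to Γ is a Carleson measure with Carleson norm M. Let {γ_j} be pairwise disjoint subarcs of Γ, each of hyperbolic length ∫_{γ_j} |dw|/(1−|w|²) at least 1, and let ζ_j ∈ γ_j for each j. Then the measure ν = Σ_j (1−|ζ_j|)·δ_{ζ_j} is a Carleson measure with ‖ν‖_C ≤ C·M. -/

import Mathlib

open Complex Metric Set MeasureTheory
open scoped NNReal ENNReal Real

/-- The open unit disk in the complex plane. -/
def unitDisk : Set ℂ := Metric.ball 0 1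

/-- A Carleson square with angular center `θ₀` and side length `ℓ`. -/
def carlesonSquare (θ₀ ℓ : ℝ) : Set ℂ :=
  {z | ∃ r θ : ℝ, 0 < 1 - r ∧ 1 - r < ℓ ∧ |θ - θ₀| < Real.pi * ℓ ∧
    z = r * Complex.exp (θ * Complex.I)}

/-- `μ` is a Carleson measure with Carleson norm at most `M`:
`μ(Q) ≤ M ℓ(Q)` for every Carleson square `Q`. -/
def IsCarlesonBound (μ : Measure ℂ) (M : ℝ) : Prop :=
  ∀ θ₀ ℓ : ℝ, θ₀ ∈ Set.Ico 0 (2 * Real.pi) → 0 < ℓ → ℓ < 1 →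
    μ (carlesonSquare θ₀ ℓ) ≤ ENNReal.ofReal (M * ℓ)

/-- A rectifiable curve: a continuous image of `[0,1]` of finite one-dimensional
Hausdorff (arclength) measure. -/
def IsRectifiableCurve (Γ : Set ℂ) : Prop :=
  (∃ γ : ℝ → ℂ, ContinuousOn γ (Set.Icc 0 1) ∧ γ '' Set.Icc 0 1 = Γ) ∧
  (μH[1] : Measure ℂ) Γ < ⊤


lemma connected_lower (K : Set ℂ) (hK : IsPreconnected K) {ζ z : ℂ} (hζ : ζ ∈ K) (hz : z ∈ K)
    {ρ : ℝ} (hρ : 0 ≤ ρ) (hd : ρ ≤ dist ζ z) :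
    ENNReal.ofReal ρ ≤ μH[1] (K ∩ Metric.closedBall ζ ρ) := by
  have hlip : LipschitzWith 1 (dist ζ) := LipschitzWith.dist_right ζ
  have himg : Set.Icc (0:ℝ) ρ ⊆ (dist ζ) '' (K ∩ Metric.closedBall ζ ρ) := by
    intro t ht
    have h1 : Set.Icc (dist ζ ζ) (dist ζ z) ⊆ (dist ζ) '' K :=
      (hK.image _ hlip.continuous.continuousOn).Icc_subset ⟨ζ, hζ, rfl⟩ ⟨z, hz, rfl⟩
    have ht' : t ∈ Set.Icc (dist ζ ζ) (dist ζ z) := by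
      simp only [dist_self]; exact ⟨ht.1, ht.2.trans hd⟩
    obtain ⟨x, hxK, hxt⟩ := h1 ht'
    exact ⟨x, ⟨hxK, Metric.mem_closedBall'.2 (hxt ▸ ht.2)⟩, hxt⟩
  calc ENNReal.ofReal ρ = μH[1] (Set.Icc (0:ℝ) ρ) := by
        rw [MeasureTheory.hausdorffMeasure_real, Real.volume_Icc]; norm_num
    _ ≤ μH[1] ((dist ζ) '' (K ∩ Metric.closedBall ζ ρ)) := measure_mono himg
    _ ≤ (1:ℝ≥0) ^ (1:ℝ) * μH[1] (K ∩ Metric.closedBall ζ ρ) :=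
        hlip.hausdorffMeasure_image_le zero_le_one _
    _ = μH[1] (K ∩ Metric.closedBall ζ ρ) := by simp

lemma small_arc_lower {K : Set ℂ} (hKm : MeasurableSet K) {ζ : ℂ} {ρ : ℝ} (hρ : 0 < ρ)
    (hζρ : ‖ζ‖ + ρ ≤ 1 - ρ) (hsub : K ⊆ Metric.ball ζ ρ)
    (hint : 1 ≤ ∫⁻ w in K, ENNReal.ofReal (1 / (1 - ‖w‖ ^ 2)) ∂(μH[1] : Measure ℂ)) :
    ENNReal.ofReal ρ ≤ μH[1] K := by
  have hbound : ∀ w ∈ K, ENNReal.ofReal (1 / (1 - ‖w‖ ^ 2)) ≤ ENNReal.ofReal (1/ρ) := by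
    intro w hw
    have h1 : ‖w‖ < 1 - ρ := by
      have := hsub hw
      rw [Metric.mem_ball] at this
      have h2 : ‖w‖ ≤ ‖w - ζ‖ + ‖ζ‖ := by
        simpa using norm_sub_norm_le w ζ
      rw [Complex.dist_eq] at this
      linarith
    have h0 : (0:ℝ) ≤ ‖w‖ := (norm_nonneg w)
    have h3 : ρ ≤ 1 - ‖w‖ ^ 2 := by nlinarith
    exact ENNReal.ofReal_le_ofReal (one_div_le_one_div_of_le hρ h3)
  have h4 : (1:ℝ≥0∞) ≤ ENNReal.ofReal (1/ρ) * μH[1] K := by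
    calc (1:ℝ≥0∞) ≤ ∫⁻ w in K, ENNReal.ofReal (1 / (1 - ‖w‖ ^ 2)) ∂(μH[1] : Measure ℂ) := hint
      _ ≤ ∫⁻ _ in K, ENNReal.ofReal (1/ρ) ∂(μH[1] : Measure ℂ) := setLIntegral_mono' hKm hbound
      _ = ENNReal.ofReal (1/ρ) * μH[1] K := setLIntegral_const K _
  calc ENNReal.ofReal ρ = ENNReal.ofReal ρ * 1 := (mul_one _).symm
    _ ≤ ENNReal.ofReal ρ * (ENNReal.ofReal (1/ρ) * μH[1] K) := mul_le_mul_right h4 _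
    _ = μH[1] K := by
        rw [← mul_assoc, ← ENNReal.ofReal_mul hρ.le, mul_one_div, div_self hρ.ne',
          ENNReal.ofReal_one, one_mul]

lemma angle_rep {r θ : ℝ} (hr : 0 < r) {ζ w : ℂ} (hζ : ζ = r * Complex.exp (θ * Complex.I))
    (hw : w ≠ 0)
    (hδ : ‖w / (‖w‖ : ℂ) - ζ / (‖ζ‖ : ℂ)‖ < 1) :
    w = (‖w‖ : ℂ) * Complex.exp ((θ + Complex.arg (w / ζ)) * Complex.I) ∧
    |Complex.arg (w / ζ)| ≤
      Real.pi / 2 * ‖w / (‖w‖ : ℂ) - ζ / (‖ζ‖ : ℂ)‖ := by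
  have habsζ : ‖ζ‖ = r := by
    rw [hζ, norm_mul, Complex.norm_real, Real.norm_eq_abs, Complex.norm_exp_ofReal_mul_I, mul_one, abs_of_pos hr]
  have hζne : ζ ≠ 0 := by
    intro h; rw [h, norm_zero] at habsζ; exact hr.ne habsζ
  set u : ℂ := w / ζ with hu_def
  have hu : u ≠ 0 := div_ne_zero hw hζne
  have habsw : ‖w‖ ≠ 0 := norm_ne_zero_iff.2 hw
  have habswC : (‖w‖ : ℂ) ≠ 0 := Complex.ofReal_ne_zero.2 habsw
  have habsζC : (‖ζ‖ : ℂ) ≠ 0 := Complex.ofReal_ne_zero.2 (habsζ ▸ hr.ne')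
  have habsu : ‖u‖ = ‖w‖ / ‖ζ‖ := norm_div _ _
  have habsuC : (‖u‖ : ℂ) ≠ 0 :=
    Complex.ofReal_ne_zero.2 (norm_ne_zero_iff.2 hu)
  set V : ℂ := w / (‖w‖ : ℂ) - ζ / (‖ζ‖ : ℂ) with hV_def
  have key : u / (‖u‖ : ℂ) - 1 = ((‖ζ‖ : ℂ) / ζ) * V := by
    rw [hV_def, hu_def, habsu]
    push_cast
    field_simp
  have habsdiff : ‖u / (‖u‖ : ℂ) - 1‖ = ‖V‖ := by
    rw [key, norm_mul, norm_div, Complex.norm_real, Real.norm_eq_abs, abs_norm, div_self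
      (norm_ne_zero_iff.2 hζne), one_mul]
  -- real part positivity
  have hre1 : (1 : ℝ) - ‖V‖ ≤ (u / (‖u‖ : ℂ)).re := by
    have h1 : |(u / (‖u‖ : ℂ) - 1).re| ≤ ‖V‖ :=
      habsdiff ▸ Complex.abs_re_le_norm _
    have h2 : (u / (‖u‖ : ℂ) - 1).re = (u / (‖u‖ : ℂ)).re - 1 := by simp
    rw [h2] at h1
    have := (abs_le.1 h1).1
    linarith
  have hupos : 0 < ‖u‖ := norm_pos_iff.2 hu
  have hre2 : 0 < u.re := by
    have h3 : (u / (‖u‖ : ℂ)).re = u.re / ‖u‖ := Complex.div_ofReal_re u _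
    have h4 : 0 < (u / (‖u‖ : ℂ)).re := lt_of_lt_of_le (by linarith) hre1
    rw [h3] at h4
    exact (div_pos_iff.1 h4).resolve_right (fun h => absurd h.2 (not_lt.2 hupos.le)) |>.1
  have harg : |Complex.arg u| < Real.pi / 2 :=
    Complex.abs_arg_lt_pi_div_two_iff.2 (Or.inl hre2)
  -- sine bound
  have hsin : |Real.sin (Complex.arg u)| ≤ ‖V‖ := by
    have h5 : Real.sin (Complex.arg u) = (u / (‖u‖ : ℂ)).im := by
      rw [Complex.sin_arg, Complex.div_ofReal_im]
    have h6 : (u / (‖u‖ : ℂ)).im = (u / (‖u‖ : ℂ) - 1).im := by simp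
    rw [h5, h6]
    exact habsdiff ▸ Complex.abs_im_le_norm _
  -- Jordan inequality
  have hπ : (0:ℝ) < Real.pi := Real.pi_pos
  have hjordan : 2 / Real.pi * |Complex.arg u| ≤ Real.sin |Complex.arg u| :=
    Real.mul_le_sin (abs_nonneg _) harg.le
  have hsinabs : Real.sin |Complex.arg u| = |Real.sin (Complex.arg u)| := by
    rcases le_or_gt 0 (Complex.arg u) with h | h
    · rw [_root_.abs_of_nonneg h, _root_.abs_of_nonneg (Real.sin_nonneg_of_nonneg_of_le_pi h
        (by linarith [harg, _root_.abs_of_nonneg h]))]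
    · rw [_root_.abs_of_neg h, Real.sin_neg, _root_.abs_of_neg]
      have : 0 < Real.sin (-Complex.arg u) := Real.sin_pos_of_pos_of_lt_pi (by linarith)
        (by rw [_root_.abs_of_neg h] at harg; linarith)
      rw [Real.sin_neg] at this; linarith
  have hargle : |Complex.arg u| ≤ Real.pi / 2 * ‖V‖ := by
    rw [hsinabs] at hjordan
    have h7 : |Real.sin (Complex.arg u)| ≤ ‖V‖ := hsin
    have h8 : 2 / Real.pi * |Complex.arg u| ≤ ‖V‖ := hjordan.trans h7
    calc |Complex.arg u| = Real.pi / 2 * (2 / Real.pi * |Complex.arg u|) := by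
          field_simp
      _ ≤ Real.pi / 2 * ‖V‖ := by
          apply mul_le_mul_of_nonneg_left h8 (by positivity)
  refine ⟨?_, hargle⟩
  -- representation
  have hexp : Complex.exp ((Complex.arg u : ℂ) * Complex.I) = u / (‖u‖ : ℂ) := by
    rw [eq_div_iff habsuC, mul_comm]
    exact Complex.norm_mul_exp_arg_mul_I u
  have : ((θ : ℂ) + (Complex.arg u : ℂ)) * Complex.I =
      (θ : ℂ) * Complex.I + (Complex.arg u : ℂ) * Complex.I := by ring
  rw [hu_def]
  push_cast
  rw [this, Complex.exp_add, hexp]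
  rw [habsu, habsζ]
  push_cast
  rw [hu_def, hζ]
  have hexpne : Complex.exp ((θ:ℂ) * Complex.I) ≠ 0 := Complex.exp_ne_zero _
  have hrC : (r:ℂ) ≠ 0 := Complex.ofReal_ne_zero.2 hr.ne'
  field_simp


lemma vbound {ζ w : ℂ} (hζ : ζ ≠ 0) (hw : w ≠ 0) :
    ‖w / (‖w‖ : ℂ) - ζ / (‖ζ‖ : ℂ)‖ ≤
      2 * ‖w - ζ‖ / ‖w‖ := by
  have habsw : ‖w‖ ≠ 0 := norm_ne_zero_iff.2 hw
  have habsζ : ‖ζ‖ ≠ 0 := norm_ne_zero_iff.2 hζ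
  have habswC : (‖w‖ : ℂ) ≠ 0 := Complex.ofReal_ne_zero.2 habsw
  have habsζC : (‖ζ‖ : ℂ) ≠ 0 := Complex.ofReal_ne_zero.2 habsζ
  have hsplit : w / (‖w‖ : ℂ) - ζ / (‖ζ‖ : ℂ) =
      (w - ζ) / (‖w‖ : ℂ) +
        ζ * (((‖ζ‖ : ℂ) - (‖w‖ : ℂ)) /
          ((‖w‖ : ℂ) * (‖ζ‖ : ℂ))) := by
    field_simp
    ring
  rw [hsplit]
  have h1 : ‖(w - ζ) / (‖w‖ : ℂ)‖ =
      ‖w - ζ‖ / ‖w‖ := by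
    rw [norm_div, Complex.norm_real, Real.norm_eq_abs, _root_.abs_of_nonneg (norm_nonneg w)]
  have h2 : ‖ζ * (((‖ζ‖ : ℂ) - (‖w‖ : ℂ)) /
      ((‖w‖ : ℂ) * (‖ζ‖ : ℂ)))‖ ≤ ‖w - ζ‖ / ‖w‖ := by
    rw [norm_mul, norm_div, norm_mul]
    have h3 : ‖(‖ζ‖ : ℂ) - (‖w‖ : ℂ)‖ =
        |‖ζ‖ - ‖w‖| := by
      rw [← Complex.ofReal_sub, Complex.norm_real, Real.norm_eq_abs]
    have h4 : |‖ζ‖ - ‖w‖| ≤ ‖ζ - w‖ :=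
      abs_norm_sub_norm_le ζ w
    have h5 : ‖ζ - w‖ = ‖w - ζ‖ := by
      rw [← neg_sub w ζ, norm_neg]
    rw [h3, Complex.norm_real, Real.norm_eq_abs, Complex.norm_real, Real.norm_eq_abs,
      _root_.abs_of_nonneg (norm_nonneg w), _root_.abs_of_nonneg (norm_nonneg ζ)]
    have hwpos : 0 < ‖w‖ := norm_pos_iff.2 hw
    have heq : ‖ζ‖ * (|‖ζ‖ - ‖w‖| / (‖w‖ * ‖ζ‖)) =
        |‖ζ‖ - ‖w‖| / ‖w‖ := by
      field_simp
    rw [heq]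
    apply div_le_div_of_nonneg_right (h4.trans h5.le) hwpos.le |>.trans_eq rfl
  calc ‖_‖ ≤ _ := norm_add_le _ _
    _ ≤ ‖w - ζ‖ / ‖w‖ + ‖w - ζ‖ / ‖w‖ := by
        rw [h1]; exact add_le_add_right h2 _
    _ = 2 * ‖w - ζ‖ / ‖w‖ := by ring

lemma closedBall_subset_bigSquare {θ₀ ℓ : ℝ} (hℓ0 : 0 < ℓ) (hℓ : ℓ < 1/3) {ζ : ℂ}
    (hζQ : ζ ∈ carlesonSquare θ₀ ℓ) :
    Metric.closedBall ζ ((1 - ‖ζ‖) / 2) ⊆ carlesonSquare θ₀ (3 * ℓ) := by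
  obtain ⟨r, θ, h1, h2, h3, hζeq⟩ := hζQ
  have hπ : (0:ℝ) < Real.pi := Real.pi_pos
  have hr1 : 1 - ℓ < r := by linarith
  have hr0 : 0 < r := by linarith
  have habsζ : ‖ζ‖ = r := by
    rw [hζeq, norm_mul, Complex.norm_real, Real.norm_eq_abs, Complex.norm_exp_ofReal_mul_I, mul_one,
      _root_.abs_of_pos hr0]
  set ρ : ℝ := (1 - r) / 2 with hρdef
  have hρ0 : 0 < ρ := by simp only [hρdef]; linarith
  have hρℓ : ρ < ℓ / 2 := by simp only [hρdef]; linarith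
  intro w hw
  rw [Metric.mem_closedBall, Complex.dist_eq, habsζ] at hw
  -- bounds on |w|
  have hlow : r - ρ ≤ ‖w‖ := by
    have := norm_sub_norm_le ζ w
    have h5 : ‖ζ - w‖ = ‖w - ζ‖ := by
      rw [← neg_sub w ζ, norm_neg]
    rw [habsζ, h5] at this
    linarith
  have hhigh : ‖w‖ ≤ r + ρ := by
    have := norm_sub_norm_le w ζ
    rw [habsζ] at this
    linarith
  have hrρ : (1:ℝ)/2 < r - ρ := by simp only [hρdef]; nlinarith
  have hwne : w ≠ 0 := by
    intro h
    rw [h, norm_zero] at hlow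
    linarith
  -- V bound
  have hζne : ζ ≠ 0 := by
    intro h; rw [h, norm_zero] at habsζ; linarith
  have hV : ‖w / (‖w‖ : ℂ) - ζ / (‖ζ‖ : ℂ)‖ ≤ 2 * (1 - r) := by
    calc ‖w / (‖w‖ : ℂ) - ζ / (‖ζ‖ : ℂ)‖
        ≤ 2 * ‖w - ζ‖ / ‖w‖ := vbound hζne hwne
      _ ≤ 2 * ρ / (r - ρ) := by
          apply div_le_div₀ (by positivity) (by linarith) (by linarith) (by linarith)
      _ ≤ 2 * ρ * 2 := by
          rw [div_le_iff₀ (by linarith)]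
          nlinarith
      _ = 2 * (1 - r) := by simp only [hρdef]; ring
  have hδ : ‖w / (‖w‖ : ℂ) - ζ / (‖ζ‖ : ℂ)‖ < 1 := by
    have : 2 * (1 - r) < 2 * ℓ := by linarith
    linarith
  obtain ⟨hrep, hargle⟩ := angle_rep hr0 hζeq hwne hδ
  refine ⟨‖w‖, θ + Complex.arg (w / ζ), ?_, ?_, ?_, ?_⟩
  · linarith
  · linarith
  · have harg : |Complex.arg (w / ζ)| ≤ Real.pi * (1 - r) := by
      calc |Complex.arg (w / ζ)| ≤ Real.pi / 2 *
          ‖w / (‖w‖ : ℂ) - ζ / (‖ζ‖ : ℂ)‖ := hargle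
        _ ≤ Real.pi / 2 * (2 * (1 - r)) := by
            apply mul_le_mul_of_nonneg_left hV (by positivity)
        _ = Real.pi * (1 - r) := by ring
    calc |θ + Complex.arg (w / ζ) - θ₀| ≤ |θ - θ₀| + |Complex.arg (w / ζ)| := by
          have := abs_add_le (θ - θ₀) (Complex.arg (w / ζ)); rw [show θ - θ₀ +
            Complex.arg (w / ζ) = θ + Complex.arg (w / ζ) - θ₀ by ring] at this; exact this
      _ < Real.pi * ℓ + Real.pi * (1 - r) := by
          have h6 : Real.pi * (1 - r) < Real.pi * ℓ := by
            apply mul_lt_mul_of_pos_left (by linarith) hπ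
          rcases lt_or_eq_of_le harg with h | h
          · linarith [h3]
          · linarith [h3]
      _ ≤ Real.pi * (3 * ℓ) := by nlinarith
  · push_cast
    exact hrep

lemma cover_lemma {w : ℂ} (hw1 : ‖w‖ < 1) {ε : ℝ} (hε0 : 0 < ε) (hε : ε ≤ 1/4)
    (hwε : ε < ‖w‖) :
    w ∈ carlesonSquare (Real.pi/3) (1 - ε) ∪ carlesonSquare (5*Real.pi/3) (1 - ε) := by
  have hπ : (0:ℝ) < Real.pi := Real.pi_pos
  have hwne : w ≠ 0 := by
    intro h; rw [h, norm_zero] at hwε; linarith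
  have hrep : w = (‖w‖ : ℂ) * Complex.exp (Complex.arg w * Complex.I) :=
    (Complex.norm_mul_exp_arg_mul_I w).symm
  have harg1 : -Real.pi < Complex.arg w := Complex.neg_pi_lt_arg w
  have harg2 : Complex.arg w ≤ Real.pi := Complex.arg_le_pi w
  rcases le_or_gt 0 (Complex.arg w) with h | h
  · left
    refine ⟨‖w‖, Complex.arg w, by linarith, by linarith, ?_, hrep⟩
    rw [abs_sub_lt_iff]
    constructor <;> nlinarith
  · right
    refine ⟨‖w‖, Complex.arg w + 2 * Real.pi, by linarith, by linarith, ?_, ?_⟩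
    · rw [abs_sub_lt_iff]
      constructor <;> nlinarith
    · have hexpeq : Complex.exp ((((Complex.arg w + 2 * Real.pi) : ℝ) : ℂ) * Complex.I) =
          Complex.exp ((Complex.arg w : ℂ) * Complex.I) := by
        push_cast
        rw [add_mul, Complex.exp_add,
          show ((2:ℂ) * (Real.pi:ℂ) * Complex.I) = 2 * Real.pi * Complex.I by ring,
          Complex.exp_two_pi_mul_I, mul_one]
      rw [hexpeq]
      exact hrep


lemma global_bound {Γ : Set ℂ} (hΓ : Γ ⊆ Metric.ball 0 1) (hΓm : MeasurableSet Γ) {M : ℝ}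
    (hM : 0 ≤ M) (hC : IsCarlesonBound ((μH[1] : Measure ℂ).restrict Γ) M) :
    (μH[1] : Measure ℂ).restrict Γ Set.univ ≤ ENNReal.ofReal (2 * M) := by
  have hπ : (0:ℝ) < Real.pi := Real.pi_pos
  set μ := (μH[1] : Measure ℂ).restrict Γ with hμdef
  haveI : MeasureTheory.NullSingletonClass (μH[1] : Measure ℂ) :=
    MeasureTheory.Measure.noAtoms_hausdorff ℂ one_pos
  have h0 : μ {(0:ℂ)} = 0 := by
    refine le_antisymm ?_ zero_le
    calc μ {(0:ℂ)} ≤ (μH[1] : Measure ℂ) {(0:ℂ)} := Measure.restrict_le_self _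
      _ = 0 := measure_singleton 0
  have hsq : ∀ n : ℕ, μ {w : ℂ | 1 / ((n:ℝ) + 4) < ‖w‖} ≤ ENNReal.ofReal (2 * M) := by
    intro n
    set ε : ℝ := 1 / ((n:ℝ) + 4) with hεdef
    have hε0 : 0 < ε := by positivity
    have hε4 : ε ≤ 1/4 := by
      rw [hεdef]
      rw [div_le_div_iff₀ (by positivity) (by norm_num)]
      push_cast; linarith [Nat.cast_nonneg (α := ℝ) n]
    have hcover : {w : ℂ | ε < ‖w‖} ∩ Γ ⊆
        (carlesonSquare (Real.pi/3) (1 - ε) ∪ carlesonSquare (5*Real.pi/3) (1 - ε)) := by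
      rintro w ⟨hw1, hw2⟩
      have hwball : ‖w‖ < 1 := by
        have := hΓ hw2
        rw [Metric.mem_ball, Complex.dist_eq, sub_zero] at this
        exact this
      exact cover_lemma hwball hε0 hε4 hw1
    have h1 : μ {w : ℂ | ε < ‖w‖} ≤
        μ (carlesonSquare (Real.pi/3) (1 - ε)) + μ (carlesonSquare (5*Real.pi/3) (1 - ε)) := by
      calc μ {w : ℂ | ε < ‖w‖}
          = (μH[1] : Measure ℂ) ({w : ℂ | ε < ‖w‖} ∩ Γ) :=
            Measure.restrict_apply' hΓm
        _ ≤ (μH[1] : Measure ℂ) (((carlesonSquare (Real.pi/3) (1 - ε) ∪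
              carlesonSquare (5*Real.pi/3) (1 - ε))) ∩ Γ) := by
            apply measure_mono
            rintro x ⟨hxA, hxΓ⟩
            exact ⟨hcover ⟨hxA, hxΓ⟩, hxΓ⟩
        _ = μ ((carlesonSquare (Real.pi/3) (1 - ε) ∪ carlesonSquare (5*Real.pi/3) (1 - ε))) :=
            (Measure.restrict_apply' hΓm).symm
        _ ≤ _ := measure_union_le _ _
    have hQ1 : μ (carlesonSquare (Real.pi/3) (1 - ε)) ≤ ENNReal.ofReal (M * (1 - ε)) :=
      hC (Real.pi/3) (1 - ε) ⟨by positivity, by linarith⟩ (by linarith) (by linarith)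
    have hQ2 : μ (carlesonSquare (5*Real.pi/3) (1 - ε)) ≤ ENNReal.ofReal (M * (1 - ε)) :=
      hC (5*Real.pi/3) (1 - ε) ⟨by positivity, by linarith⟩ (by linarith) (by linarith)
    calc μ {w : ℂ | 1 / ((n:ℝ) + 4) < ‖w‖} ≤
        ENNReal.ofReal (M * (1 - ε)) + ENNReal.ofReal (M * (1 - ε)) := by
          refine h1.trans (add_le_add hQ1 hQ2)
      _ = ENNReal.ofReal (M * (1 - ε) + M * (1 - ε)) :=
          (ENNReal.ofReal_add (by nlinarith) (by nlinarith)).symm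
      _ ≤ ENNReal.ofReal (2 * M) := ENNReal.ofReal_le_ofReal (by nlinarith)
  have hmono : Monotone (fun n : ℕ => {w : ℂ | 1 / ((n:ℝ) + 4) < ‖w‖}) := by
    intro n m hnm w hw
    simp only [Set.mem_setOf_eq] at *
    have : 1 / ((m:ℝ) + 4) ≤ 1 / ((n:ℝ) + 4) := by
      apply one_div_le_one_div_of_le (by positivity)
      have : ((n:ℝ)) ≤ (m:ℝ) := Nat.cast_le.2 hnm
      linarith
    linarith
  have hcompl : ({(0:ℂ)}ᶜ : Set ℂ) ⊆ ⋃ n : ℕ, {w : ℂ | 1 / ((n:ℝ) + 4) < ‖w‖} := by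
    intro w hw
    have hw0 : 0 < ‖w‖ := by
      simp only [Set.mem_compl_iff, Set.mem_singleton_iff] at hw
      exact norm_pos_iff.2 hw
    obtain ⟨n, hn⟩ := exists_nat_one_div_lt hw0
    refine Set.mem_iUnion.2 ⟨n, ?_⟩
    simp only [Set.mem_setOf_eq]
    calc 1 / ((n:ℝ) + 4) ≤ 1 / ((n:ℝ) + 1) := by
          apply one_div_le_one_div_of_le (by positivity) (by linarith)
      _ < ‖w‖ := hn
  have hcomplμ : μ ({(0:ℂ)}ᶜ) ≤ ENNReal.ofReal (2 * M) := by
    calc μ ({(0:ℂ)}ᶜ) ≤ μ (⋃ n : ℕ, {w : ℂ | 1 / ((n:ℝ) + 4) < ‖w‖}) :=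
          measure_mono hcompl
      _ = ⨆ n : ℕ, μ {w : ℂ | 1 / ((n:ℝ) + 4) < ‖w‖} := hmono.measure_iUnion
      _ ≤ ENNReal.ofReal (2 * M) := iSup_le hsq
  calc μ Set.univ = μ ({(0:ℂ)}ᶜ ∪ {(0:ℂ)}) := by rw [Set.compl_union_self]
    _ ≤ μ ({(0:ℂ)}ᶜ) + μ {(0:ℂ)} := measure_union_le _ _
    _ ≤ ENNReal.ofReal (2 * M) + 0 := add_le_add hcomplμ h0.le
    _ = ENNReal.ofReal (2 * M) := add_zero _

lemma arc_lower {K : Set ℂ} (hKc : IsCompact K) (hKconn : IsConnected K)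
    {ζ : ℂ} (hζK : ζ ∈ K) (habs : ‖ζ‖ < 1)
    (hint : 1 ≤ ∫⁻ w in K, ENNReal.ofReal (1 / (1 - ‖w‖ ^ 2)) ∂(μH[1] : Measure ℂ)) :
    ENNReal.ofReal ((1 - ‖ζ‖) / 2) ≤
      μH[1] (K ∩ Metric.closedBall ζ ((1 - ‖ζ‖) / 2)) := by
  set ρ : ℝ := (1 - ‖ζ‖) / 2 with hρdef
  have hρ0 : 0 < ρ := by simp only [hρdef]; linarith
  by_cases hcase : ∃ z ∈ K, ρ ≤ dist ζ z
  · obtain ⟨z, hz, hd⟩ := hcase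
    exact connected_lower K hKconn.isPreconnected hζK hz hρ0.le hd
  · push_neg at hcase
    have hsub : K ⊆ Metric.ball ζ ρ := by
      intro z hz
      rw [Metric.mem_ball, dist_comm]
      exact hcase z hz
    have hineq : ‖ζ‖ + ρ ≤ 1 - ρ := by simp only [hρdef]; linarith
    have := small_arc_lower hKc.measurableSet hρ0 hineq hsub hint
    rwa [Set.inter_eq_self_of_subset_left (hsub.trans Metric.ball_subset_closedBall)]


/-- There is an absolute constant `C > 0` such that: if `Γ ⊆ 𝔻` is a countable union
of rectifiable curves whose arclength measure is Carleson with norm `M`, `{γ_j}` are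
pairwise disjoint (compact, connected) subarcs of `Γ` each of hyperbolic length
`∫_{γ_j} |dw|/(1-|w|²)` at least `1`, and `ζ_j ∈ γ_j`, then
`ν = Σ_j (1-|ζ_j|) δ_{ζ_j}` is a Carleson measure with `‖ν‖_C ≤ C·M`. -/
theorem discretization_carleson :
    ∃ C : ℝ, 0 < C ∧
      ∀ (Γ : Set ℂ), Γ ⊆ unitDisk →
      (∃ c : ℕ → Set ℂ, Γ = ⋃ n, c n ∧ ∀ n, IsRectifiableCurve (c n)) →
      ∀ M : ℝ, 0 ≤ M →
      IsCarlesonBound ((μH[1] : Measure ℂ).restrict Γ) M →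
      ∀ (ι : Type) (_ : Countable ι) (γ : ι → Set ℂ) (ζ : ι → ℂ),
        (∀ j, γ j ⊆ Γ) →
        (∀ j, IsCompact (γ j)) →
        (∀ j, IsConnected (γ j)) →
        Pairwise (Function.onFun Disjoint γ) →
        (∀ j, 1 ≤ ∫⁻ w in γ j,
          ENNReal.ofReal (1 / (1 - ‖w‖ ^ 2)) ∂(μH[1] : Measure ℂ)) →
        (∀ j, ζ j ∈ γ j) →
        IsCarlesonBound
          (MeasureTheory.Measure.sum fun j =>
            (ENNReal.ofReal (1 - ‖ζ j‖)) • MeasureTheory.Measure.dirac (ζ j))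
          (C * M) := by
  classical
  refine ⟨18, by norm_num, ?_⟩
  intro Γ hΓsub hrect M hM hCar ι hcount γarc ζpt hsubΓ hcomp hconn hdisj hhyp hmem
  haveI : Countable ι := hcount
  -- Γ is measurable
  have hΓm : MeasurableSet Γ := by
    obtain ⟨c, hceq, hcrect⟩ := hrect
    rw [hceq]
    refine MeasurableSet.iUnion fun n => ?_
    obtain ⟨⟨g, hg, himg⟩, -⟩ := (hcrect n : (∃ γ : ℝ → ℂ, ContinuousOn γ (Set.Icc 0 1) ∧ γ '' Set.Icc 0 1 = c n) ∧ (μH[1] : Measure ℂ) (c n) < ⊤)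
    exact (himg ▸ (isCompact_Icc.image_of_continuousOn hg)).isClosed.measurableSet
  intro θ₀ ℓ hθ₀ hℓ0 hℓ1
  set Q : Set ℂ := carlesonSquare θ₀ ℓ with hQdef
  set E : ι → Set ℂ := fun j =>
    if ζpt j ∈ Q then γarc j ∩ Metric.closedBall (ζpt j) ((1 - ‖ζpt j‖) / 2)
    else ∅ with hEdef
  have hEsub : ∀ j, E j ⊆ γarc j := by
    intro j
    simp only [hEdef]
    split_ifs
    · exact Set.inter_subset_left
    · exact Set.empty_subset _
  have hEm : ∀ j, MeasurableSet (E j) := by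
    intro j
    simp only [hEdef]
    split_ifs
    · exact ((hcomp j).measurableSet).inter measurableSet_closedBall
    · exact MeasurableSet.empty
  have hEdisj : Pairwise (Function.onFun Disjoint E) := fun i j hij =>
    ((hdisj hij).mono (hEsub i) (hEsub j))
  have habsζ : ∀ j, ‖ζpt j‖ < 1 := by
    intro j
    have := hΓsub (hsubΓ j (hmem j))
    rwa [unitDisk, Metric.mem_ball, Complex.dist_eq, sub_zero] at this
  have hlower : ∀ j, ζpt j ∈ Q →
      ENNReal.ofReal (1 - ‖ζpt j‖) ≤ 2 * μH[1] (E j) := by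
    intro j hj
    have h1 := arc_lower (hcomp j) (hconn j) (hmem j) (habsζ j) (hhyp j)
    have h2 : E j = γarc j ∩ Metric.closedBall (ζpt j) ((1 - ‖ζpt j‖) / 2) := by
      simp only [hEdef, if_pos hj]
    rw [h2]
    calc ENNReal.ofReal (1 - ‖ζpt j‖)
        = 2 * ENNReal.ofReal ((1 - ‖ζpt j‖) / 2) := by
          rw [← ENNReal.ofReal_ofNat, ← ENNReal.ofReal_mul (by norm_num)]
          congr 1
          ring
      _ ≤ 2 * μH[1] (γarc j ∩ Metric.closedBall (ζpt j) ((1 - ‖ζpt j‖) / 2)) :=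
          mul_le_mul_right h1 _
  -- compute the measure of Q
  have hsum : (MeasureTheory.Measure.sum fun j =>
      (ENNReal.ofReal (1 - ‖ζpt j‖)) • MeasureTheory.Measure.dirac (ζpt j)) Q
      = ∑' j, ENNReal.ofReal (1 - ‖ζpt j‖) * Set.indicator Q 1 (ζpt j) := by
    rw [MeasureTheory.Measure.sum_apply_of_countable]
    congr 1
    ext j
    rw [MeasureTheory.Measure.smul_apply, MeasureTheory.Measure.dirac_apply, smul_eq_mul]
  have hbound : ∀ j, ENNReal.ofReal (1 - ‖ζpt j‖) * Set.indicator Q 1 (ζpt j)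
      ≤ 2 * μH[1] (E j) := by
    intro j
    by_cases hj : ζpt j ∈ Q
    · rw [Set.indicator_of_mem hj, Pi.one_apply, mul_one]
      exact hlower j hj
    · rw [Set.indicator_of_notMem hj, mul_zero]
      exact zero_le
  have hνQ : (MeasureTheory.Measure.sum fun j =>
      (ENNReal.ofReal (1 - ‖ζpt j‖)) • MeasureTheory.Measure.dirac (ζpt j)) Q
      ≤ 2 * μH[1] (⋃ j, E j) := by
    rw [hsum, MeasureTheory.measure_iUnion hEdisj hEm, ← ENNReal.tsum_mul_left]
    exact ENNReal.tsum_le_tsum hbound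
  have hEΓ : (⋃ j, E j) ⊆ Γ := Set.iUnion_subset fun j => (hEsub j).trans (hsubΓ j)
  by_cases hcase : ℓ < 1/3
  · -- small squares
    have hbig : (⋃ j, E j) ⊆ carlesonSquare θ₀ (3 * ℓ) ∩ Γ := by
      refine Set.subset_inter ?_ hEΓ
      refine Set.iUnion_subset fun j => ?_
      simp only [hEdef]
      split_ifs with hj
      · exact Set.inter_subset_right.trans (closedBall_subset_bigSquare hℓ0 hcase hj)
      · exact Set.empty_subset _
    have hmeas : μH[1] (⋃ j, E j) ≤ ENNReal.ofReal (M * (3 * ℓ)) := by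
      calc μH[1] (⋃ j, E j) ≤ μH[1] (carlesonSquare θ₀ (3 * ℓ) ∩ Γ) := measure_mono hbig
        _ = (μH[1] : Measure ℂ).restrict Γ (carlesonSquare θ₀ (3 * ℓ)) :=
            (Measure.restrict_apply' hΓm).symm
        _ ≤ ENNReal.ofReal (M * (3 * ℓ)) :=
            hCar θ₀ (3 * ℓ) hθ₀ (by linarith) (by linarith)
    calc _ ≤ 2 * μH[1] (⋃ j, E j) := hνQ
      _ ≤ 2 * ENNReal.ofReal (M * (3 * ℓ)) := mul_le_mul_right hmeas _
      _ = ENNReal.ofReal (2 * (M * (3 * ℓ))) := by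
          rw [← ENNReal.ofReal_ofNat, ← ENNReal.ofReal_mul (by norm_num)]
      _ ≤ ENNReal.ofReal (18 * M * ℓ) := ENNReal.ofReal_le_ofReal (by nlinarith)
  · -- big squares
    push_neg at hcase
    have hmeas : μH[1] (⋃ j, E j) ≤ ENNReal.ofReal (2 * M) := by
      calc μH[1] (⋃ j, E j) ≤ μH[1] (Set.univ ∩ Γ) := measure_mono
            (Set.subset_inter (Set.subset_univ _) hEΓ)
        _ = (μH[1] : Measure ℂ).restrict Γ Set.univ := (Measure.restrict_apply' hΓm).symm
        _ ≤ ENNReal.ofReal (2 * M) := global_bound hΓsub hΓm hM hCar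
    calc _ ≤ 2 * μH[1] (⋃ j, E j) := hνQ
      _ ≤ 2 * ENNReal.ofReal (2 * M) := mul_le_mul_right hmeas _
      _ = ENNReal.ofReal (2 * (2 * M)) := by
          rw [← ENNReal.ofReal_ofNat, ← ENNReal.ofReal_mul (by norm_num)]
      _ ≤ ENNReal.ofReal (18 * M * ℓ) := ENNReal.ofReal_le_ofReal (by nlinarith)
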